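/- Let G be a group in which the centralizer of every nontrivial element is infinite cyclic, and suppose moreover that for every nontrivial x and every nonzero integer n, the centralizer of x^n equals the centralizer of x. If x is a nontrivial element of G and k x k^{-1} = x^n for some k in G and some integer n, then n = 1 or n = -1. -/

import Mathlib

theorem no_conjugate_to_proper_power
    {G : Type*} [Group G]
    (hcent : ∀ x : G, x ≠ 1 → Nonempty (Subgroup.centralizer {x} ≃* Multiplicative ℤ))
    (hstab : ∀ x : G, x ≠ 1 → ∀ n : ℤ, n ≠ 0 →
      Subgroup.centralizer {x ^ n} = Subgroup.centralizer {x})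
    (x : G) (hx : x ≠ 1) (k : G) (n : ℤ) (h : k * x * k⁻¹ = x ^ n) :
    n = 1 ∨ n = -1 := by
  rcases eq_or_ne n 0 with rfl | hn
  · exfalso; apply hx
    rw [zpow_zero] at h
    have : x = k⁻¹ * 1 * k := by rw [← h]; group
    simpa using this
  have hxC : x ∈ Subgroup.centralizer ({x} : Set G) :=
    Subgroup.mem_centralizer_iff.mpr (by
      rintro g hg; rw [Set.mem_singleton_iff] at hg; rw [hg])
  have hstabn := hstab x hx n hn
  have hmap : (Subgroup.centralizer ({x} : Set G)).map (MulAut.conj k).toMonoidHom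
      = Subgroup.centralizer ({x} : Set G) := by
    ext y
    constructor
    · rintro ⟨c, hc, rfl⟩
      rw [← hstabn]
      refine Subgroup.mem_centralizer_iff.mpr ?_
      rintro g hg; rw [Set.mem_singleton_iff] at hg; rw [hg]
      have hcx : x * c = c * x := Subgroup.mem_centralizer_iff.mp hc x rfl
      simp only [MulAut.conj_apply, MulEquiv.coe_toMonoidHom]
      rw [← h]
      calc (k * x * k⁻¹) * (k * c * k⁻¹) = k * (x * c) * k⁻¹ := by group
        _ = k * (c * x) * k⁻¹ := by rw [hcx]
        _ = (k * c * k⁻¹) * (k * x * k⁻¹) := by group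
    · intro hy
      refine ⟨k⁻¹ * y * k, ?_, by simp [MulAut.conj_apply, mul_assoc]⟩
      rw [← hstabn] at hy
      have hyx : x ^ n * y = y * x ^ n := Subgroup.mem_centralizer_iff.mp hy _ rfl
      rw [← h] at hyx
      refine Subgroup.mem_centralizer_iff.mpr ?_
      rintro g hg; rw [Set.mem_singleton_iff] at hg; rw [hg]
      have key : k * (x * (k⁻¹ * y * k)) * k⁻¹ = k * ((k⁻¹ * y * k) * x) * k⁻¹ := by
        calc k * (x * (k⁻¹ * y * k)) * k⁻¹ = (k * x * k⁻¹) * y := by group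
          _ = y * (k * x * k⁻¹) := hyx
          _ = k * ((k⁻¹ * y * k) * x) * k⁻¹ := by group
      exact mul_left_cancel (mul_right_cancel key)
  let φ : Subgroup.centralizer ({x} : Set G) ≃* Subgroup.centralizer ({x} : Set G) :=
    ((MulAut.conj k).subgroupMap _).trans (MulEquiv.subgroupCongr hmap)
  have hφx : φ ⟨x, hxC⟩ = ⟨x, hxC⟩ ^ n := by
    ext
    rw [Subgroup.coe_zpow]
    show (MulAut.conj k) x = x ^ n
    simpa [MulAut.conj_apply] using h
  obtain ⟨ψ⟩ := hcent x hx
  set α : Multiplicative ℤ ≃* Multiplicative ℤ := (ψ.symm.trans φ).trans ψ with hα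
  set t : Multiplicative ℤ := ψ ⟨x, hxC⟩ with ht
  have hαt : α t = t ^ n := by
    rw [hα, ht]
    simp [hφx, map_zpow]
  set m : ℤ := (α (Multiplicative.ofAdd 1)).toAdd with hm
  have key : ∀ a : Multiplicative ℤ, (α a).toAdd = a.toAdd * m := by
    intro a
    have ha : a = (Multiplicative.ofAdd (1 : ℤ)) ^ a.toAdd := by
      rw [← ofAdd_zsmul]
      simp
    rw [ha, map_zpow, toAdd_zpow]
    simp [hm, smul_eq_mul, mul_comm]
  have hunit : IsUnit m := by
    have h1 := key (α.symm (Multiplicative.ofAdd 1))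
    simp at h1
    exact IsUnit.of_mul_eq_one (a := m) _ (by rw [mul_comm]; exact h1.symm)
  have ht0 : t.toAdd ≠ 0 := by
    intro h0
    apply hx
    have h1 : t = 1 := by
      have := congrArg Multiplicative.ofAdd h0
      simpa using this
    rw [ht] at h1
    have := ψ.injective (h1.trans (map_one ψ).symm)
    exact congrArg Subtype.val this
  have heq : t.toAdd * m = n * t.toAdd := by
    rw [← key t, hαt, toAdd_zpow, smul_eq_mul]
  have hmn : m = n := mul_left_cancel₀ ht0 (by rw [heq, mul_comm])
  rw [← hmn]
  exact Int.isUnit_iff.mp hunit
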